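/- Let K be a field of characteristic 0, let d = e·d′ with e ≥ 2 and d′ ≥ 1 integers. Suppose M(x), G(x) ∈ K[x] are monic of degrees 2d′ and e respectively, and let P(x) = M(G(x)), a monic polynomial of degree 2d. If H(x) (monic of degree d) and L(x) (degree ≤ d−1) are the unique polynomials with P(x) = H(x)^2 − L(x), then deg L ≤ d − e. -/

import Mathlib

open Polynomial


/-- Existence of the square-root approximation: for monic `M` of degree `2n`,
there is a monic `h` of degree `n` with `deg (h² - M) < n`. -/
lemma exists_sqrt_approx (K : Type) [Field K] [CharZero K] (n : ℕ) (M : K[X])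
    (hM : M.Monic) (hMdeg : M.natDegree = 2 * n) :
    ∃ h : K[X], h.Monic ∧ h.natDegree = n ∧ (h ^ 2 - M).degree < (n : WithBot ℕ) := by
  have key : ∀ k : ℕ, k ≤ n → ∃ h : K[X], h.Monic ∧ h.natDegree = n ∧
      (h ^ 2 - M).degree < ((2 * n - k : ℕ) : WithBot ℕ) := by
    intro k
    induction k with
    | zero =>
      intro _
      refine ⟨X ^ n, monic_X_pow n, natDegree_X_pow n, ?_⟩
      have h1 : ((X : K[X]) ^ n) ^ 2 = X ^ (2 * n) := by
        rw [← pow_mul, mul_comm]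
      rw [h1, Nat.sub_zero]
      have hMne : M ≠ 0 := hM.ne_zero
      have hdeg : (X ^ (2 * n) : K[X]).degree = M.degree := by
        rw [degree_X_pow, degree_eq_natDegree hM.ne_zero, hMdeg]
      calc (X ^ (2 * n) - M).degree < (X ^ (2 * n) : K[X]).degree := by
            apply degree_sub_lt hdeg (pow_ne_zero _ X_ne_zero)
            rw [leadingCoeff_X_pow, hM.leadingCoeff]
        _ = ((2 * n : ℕ) : WithBot ℕ) := degree_X_pow _
    | succ k ih =>
      intro hk1
      obtain ⟨h, hh, hhdeg, hlt⟩ := ih (Nat.le_of_succ_le hk1)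
      have hkn : k < n := hk1
      set m : ℕ := 2 * n - k - 1 with hm
      set c : K := (h ^ 2 - M).coeff m with hc
      set b : K := c / 2 with hb
      set a : ℕ := n - k - 1 with ha
      have han : n + a = m := by omega
      have h2b : (2 : K) * b = c := by
        rw [hb]; field_simp
      set h' : K[X] := h - C b * X ^ a with hh'
      have hdeg_h : h.degree = (n : WithBot ℕ) := by
        rw [degree_eq_natDegree hh.ne_zero, hhdeg]
      have hdegCb : (C b * X ^ a : K[X]).degree < h.degree := by
        refine lt_of_le_of_lt (degree_C_mul_X_pow_le a b) ?_
        rw [hdeg_h]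
        exact_mod_cast (by omega : a < n)
      have hh'monic : h'.Monic := by
        rw [hh', sub_eq_add_neg]
        exact hh.add_of_left (by rwa [degree_neg])
      have hh'deg : h'.natDegree = n := by
        have : h'.degree = h.degree := degree_sub_eq_left_of_degree_lt hdegCb
        have := degree_eq_natDegree hh'monic.ne_zero ▸ this
        rw [hdeg_h] at this
        exact_mod_cast this
      refine ⟨h', hh'monic, hh'deg, ?_⟩
      have hKey : h' ^ 2 - M = (h ^ 2 - M) - C (2 * b) * X ^ a * h + C (b ^ 2) * (X ^ a) ^ 2 := by
        rw [hh']
        rw [show (C (2 * b) : K[X]) = 2 * C b by rw [C_mul, map_ofNat],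
            show (C (b ^ 2) : K[X]) = (C b) ^ 2 by rw [map_pow]]
        ring
      rw [degree_lt_iff_coeff_zero]
      intro m' hm'
      have hm'ge : m ≤ m' := by
        have : (2 * n - (k + 1) : ℕ) ≤ m' := by exact_mod_cast hm'
        omega
      rw [hKey]
      rcases eq_or_lt_of_le hm'ge with heq | hlt'
      · subst heq
        have c1 : (C (2 * b) * X ^ a * h).coeff m = c := by
          rw [mul_assoc, coeff_C_mul, ← han, coeff_X_pow_mul]
          have t1 : h.coeff n = 1 := by rw [← hhdeg]; exact hh.coeff_natDegree
          rw [t1, mul_one, h2b]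
        have c2 : (C (b ^ 2) * (X ^ a) ^ 2).coeff m = 0 := by
          rw [← pow_mul, coeff_C_mul, coeff_X_pow, if_neg (by omega), mul_zero]
        rw [coeff_add, coeff_sub, c1, c2, add_zero, ← hc, sub_self]
      · -- m < m' : each piece has degree ≤ m
        have e1 : (h ^ 2 - M).coeff m' = 0 := by
          apply coeff_eq_zero_of_degree_lt
          refine lt_of_lt_of_le hlt ?_
          exact_mod_cast (by omega : (2 * n - k : ℕ) ≤ m')
        have e2 : (C (2 * b) * X ^ a * h).coeff m' = 0 := by
          apply coeff_eq_zero_of_degree_lt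
          refine lt_of_le_of_lt (degree_mul_le _ _) ?_
          refine lt_of_le_of_lt (add_le_add (degree_C_mul_X_pow_le a (2 * b)) hdeg_h.le) ?_
          rw [← Nat.cast_add]
          exact_mod_cast (by omega : a + n < m')
        have e3 : (C (b ^ 2) * (X ^ a) ^ 2).coeff m' = 0 := by
          rw [← pow_mul, coeff_C_mul, coeff_X_pow, if_neg (by omega), mul_zero]
        rw [coeff_add, coeff_sub, e1, e2, e3, add_zero, sub_zero]
  obtain ⟨h, hh, hhd, hlt⟩ := key n le_rfl
  exact ⟨h, hh, hhd, by simpa [two_mul, Nat.add_sub_cancel] using hlt⟩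

/-- If `d = e·d'` with `e ≥ 2`, `d' ≥ 1`, `M` and `G` are monic of degrees `2d'` and `e`,
and `P = M ∘ G = H² - L` is the square-root decomposition of the composite polynomial
(`H` monic of degree `d`, `deg L ≤ d - 1`), then in fact `deg L ≤ d - e`. -/
theorem stmt1 (K : Type) [Field K] [CharZero K] (e d' : ℕ) (he : 2 ≤ e) (hd' : 1 ≤ d')
    (M G H L : K[X]) (hM : M.Monic) (hMdeg : M.natDegree = 2 * d')
    (hG : G.Monic) (hGdeg : G.natDegree = e)
    (hH : H.Monic) (hHdeg : H.natDegree = e * d')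
    (hL : L.degree < ((e * d' : ℕ) : WithBot ℕ))
    (hdec : M.comp G = H ^ 2 - L) :
    L.degree ≤ ((e * d' - e : ℕ) : WithBot ℕ) := by
  obtain ⟨h, hh, hhd, hlt⟩ := exists_sqrt_approx K d' M hM hMdeg
  set H' : K[X] := h.comp G with hH'
  set L' : K[X] := (h ^ 2 - M).comp G with hL'
  have hGne : G.natDegree ≠ 0 := by omega
  have hH'monic : H'.Monic := hh.comp hG hGne
  have hH'deg : H'.natDegree = e * d' := by
    rw [hH', natDegree_comp, hhd, hGdeg, mul_comm]
  have hcomp : M.comp G = H' ^ 2 - L' := by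
    rw [hH', hL', sub_comp, pow_comp]; ring
  -- bound on L'
  have hL'deg : L'.degree ≤ ((e * d' - e : ℕ) : WithBot ℕ) := by
    rcases eq_or_ne (h ^ 2 - M) 0 with h0 | h0
    · simp [hL', h0]
    · have hnd : (h ^ 2 - M).natDegree < d' := by
        have := (degree_eq_natDegree h0) ▸ hlt
        exact_mod_cast this
      have : L'.natDegree ≤ e * d' - e := by
        rw [hL', natDegree_comp, hGdeg]
        calc (h ^ 2 - M).natDegree * e ≤ (d' - 1) * e :=
              Nat.mul_le_mul_right e (by omega)
          _ = e * d' - e := by rw [Nat.sub_mul, one_mul, mul_comm]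
      exact le_trans (degree_le_natDegree) (by exact_mod_cast this)
  -- uniqueness: H = H'
  have hd2 : (0 : ℕ) < e * d' := by positivity
  have heq : H ^ 2 - L = H' ^ 2 - L' := by rw [← hdec, hcomp]
  have hHH' : H = H' := by
    by_contra hne
    have hsub : (H - H') * (H + H') = L - L' := by ring_nf; linear_combination heq
    have hsumdeg : (H + H').degree = ((e * d' : ℕ) : WithBot ℕ) := by
      apply le_antisymm
      · refine le_trans (degree_add_le _ _) ?_
        rw [degree_eq_natDegree hH.ne_zero, degree_eq_natDegree hH'monic.ne_zero, hHdeg, hH'deg]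
        simp
      · apply le_degree_of_ne_zero
        have t1 : H.coeff (e * d') = 1 := by rw [← hHdeg]; exact hH.coeff_natDegree
        have t2 : H'.coeff (e * d') = 1 := by rw [← hH'deg]; exact hH'monic.coeff_natDegree
        rw [coeff_add, t1, t2]
        norm_num
    have hsubne : H - H' ≠ 0 := sub_ne_zero.mpr hne
    have hge : ((e * d' : ℕ) : WithBot ℕ) ≤ ((H - H') * (H + H')).degree := by
      rw [degree_mul, hsumdeg]
      have : (0 : WithBot ℕ) ≤ (H - H').degree := zero_le_degree_iff.mpr hsubne
      calc ((e * d' : ℕ) : WithBot ℕ) = 0 + ((e * d' : ℕ) : WithBot ℕ) := by rw [zero_add]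
        _ ≤ (H - H').degree + ((e * d' : ℕ) : WithBot ℕ) := by
            exact add_le_add this le_rfl
    have hlt2 : (L - L').degree < ((e * d' : ℕ) : WithBot ℕ) := by
      refine lt_of_le_of_lt (degree_sub_le _ _) (max_lt hL ?_)
      refine lt_of_le_of_lt hL'deg ?_
      exact_mod_cast (by omega : e * d' - e < e * d')
    rw [hsub] at hge
    exact absurd (lt_of_le_of_lt hge hlt2) (lt_irrefl _)
  have : L = L' := by
    have h2 := heq
    rw [hHH'] at h2
    linear_combination -h2
  rw [this]; exact hL'deg
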